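/- arXiv:2310.13722 — 4 statements merged into one kernel-verified Lean document; each statement's English description precedes it below -/
import Mathlib

section
/- Let V be a real vector space equipped with two inner products ⟨·,·⟩₁ and ⟨·,·⟩₂, and fix θ₀ ∈ (0,π). Suppose the two inner products define the same θ₀ angle, i.e., for all nonzero x, y ∈ V, ⟨x,y⟩₁ = cos(θ₀)·‖x‖₁‖y‖₁ if and only if ⟨x,y⟩₂ = cos(θ₀)·‖x‖₂‖y‖₂. Then there exists a constant c > 0 such that ⟨x,y⟩₂ = c·⟨x,y⟩₁ for all x, y ∈ V. -/
section Helpers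

variable {V : Type*} [AddCommGroup V] [Module ℝ V] (p : InnerProductSpace.Core ℝ V)

theorem core_symm (x y : V) : p.inner x y = p.inner y x := by
  have := p.conj_inner_symm y x
  simpa using this

theorem core_smul_left (r : ℝ) (x y : V) : p.inner (r • x) y = r * p.inner x y := by
  have := p.smul_left x y r
  simpa using this

theorem core_add_left (x y z : V) : p.inner (x + y) z = p.inner x z + p.inner y z :=
  p.add_left x y z

theorem core_smul_right (r : ℝ) (x y : V) : p.inner x (r • y) = r * p.inner x y := by
  rw [core_symm, core_smul_left, core_symm]

theorem core_add_right (x y z : V) : p.inner x (y + z) = p.inner x y + p.inner x z := by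
  rw [core_symm, core_add_left, core_symm p y x, core_symm p z x]

theorem core_zero_left (y : V) : p.inner 0 y = 0 := by
  have := core_smul_left p 0 0 y
  simpa using this

theorem core_self_nonneg (x : V) : 0 ≤ p.inner x x := by
  have := p.re_inner_nonneg x
  simpa using this

theorem core_self_pos {x : V} (hx : x ≠ 0) : 0 < p.inner x x :=
  lt_of_le_of_ne (core_self_nonneg p x) (fun hc => hx (p.definite x hc.symm))

theorem core_sub_left (x y z : V) : p.inner (x - y) z = p.inner x z - p.inner y z := by
  rw [sub_eq_add_neg, core_add_left, ← neg_one_smul ℝ y, core_smul_left]; ring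

theorem core_sub_right (x y z : V) : p.inner x (y - z) = p.inner x y - p.inner x z := by
  rw [core_symm, core_sub_left, core_symm p y x, core_symm p z x]

theorem core_ne_zero_of_self_ne {x : V} (hx : p.inner x x ≠ 0) : x ≠ 0 := by
  intro h0
  exact hx (by rw [h0]; exact core_zero_left p 0)

end Helpers

/-- Two real inner products defining the same `θ₀ ∈ (0, π)` angle are conformal. -/
theorem stmt_7 {V : Type*} [AddCommGroup V] [Module ℝ V]
    (p₁ p₂ : InnerProductSpace.Core ℝ V) (θ₀ : ℝ)
    (hθ₀ : θ₀ ∈ Set.Ioo 0 Real.pi)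
    (h : ∀ x y : V, x ≠ 0 → y ≠ 0 →
      (p₁.inner x y =
        Real.cos θ₀ * (Real.sqrt (p₁.inner x x) * Real.sqrt (p₁.inner y y)) ↔
       p₂.inner x y =
        Real.cos θ₀ * (Real.sqrt (p₂.inner x x) * Real.sqrt (p₂.inner y y)))) :
    ∃ c : ℝ, 0 < c ∧ ∀ x y : V, p₂.inner x y = c * p₁.inner x y := by
  obtain ⟨hθ₁, hθ₂⟩ := hθ₀
  set k := Real.cos θ₀ with hk_def
  set s := Real.sin θ₀ with hs_def
  have hs : 0 < s := Real.sin_pos_of_pos_of_lt_pi hθ₁ hθ₂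
  have hks : k ^ 2 + s ^ 2 = 1 := by
    rw [hk_def, hs_def, add_comm]; exact Real.sin_sq_add_cos_sq θ₀
  -- Step 1: p₁-orthogonality implies p₂-orthogonality
  have orth : ∀ x y : V, x ≠ 0 → y ≠ 0 → p₁.inner x y = 0 → p₂.inner x y = 0 := by
    intro x y hx hy hxy
    by_cases hk0 : k = 0
    · have := (h x y hx hy).mp (by rw [hxy, hk0]; ring)
      rw [hk0] at this; simpa using this
    · have hα : 0 < p₁.inner x x := core_self_pos p₁ hx
      have hβ : 0 < p₁.inner y y := core_self_pos p₁ hy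
      obtain ⟨u, hu_def⟩ : ∃ u : V, u = (Real.sqrt (p₁.inner x x))⁻¹ • x := ⟨_, rfl⟩
      obtain ⟨v, hv_def⟩ : ∃ v : V, v = (Real.sqrt (p₁.inner y y))⁻¹ • y := ⟨_, rfl⟩
      have hsa : Real.sqrt (p₁.inner x x) ≠ 0 := ne_of_gt (Real.sqrt_pos.mpr hα)
      have hsb : Real.sqrt (p₁.inner y y) ≠ 0 := ne_of_gt (Real.sqrt_pos.mpr hβ)
      have hu0 : u ≠ 0 := hu_def ▸ smul_ne_zero (inv_ne_zero hsa) hx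
      have huu : p₁.inner u u = 1 := by
        rw [hu_def, core_smul_left, core_smul_right,
          ← Real.sqrt_mul_self (le_of_lt hα)]
        field_simp
        exact (Real.sq_sqrt (Real.sqrt_nonneg _)).symm
      have hvv : p₁.inner v v = 1 := by
        rw [hv_def, core_smul_left, core_smul_right,
          ← Real.sqrt_mul_self (le_of_lt hβ)]
        field_simp
        exact (Real.sq_sqrt (Real.sqrt_nonneg _)).symm
      have huv : p₁.inner u v = 0 := by
        rw [hu_def, hv_def, core_smul_left, core_smul_right, hxy]; ring
      have hvu : p₁.inner v u = 0 := by rw [core_symm]; exact huv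
      obtain ⟨z, hz_def⟩ : ∃ z : V, z = k • u + s • v := ⟨_, rfl⟩
      obtain ⟨z', hz'_def⟩ : ∃ z' : V, z' = k • u - s • v := ⟨_, rfl⟩
      have hzz : p₁.inner z z = 1 := by
        rw [hz_def]
        simp only [core_add_left, core_add_right, core_sub_left, core_sub_right,
          core_smul_left, core_smul_right, huu, hvv, huv, hvu]
        linear_combination hks
      have hz'z' : p₁.inner z' z' = 1 := by
        rw [hz'_def]
        simp only [core_add_left, core_add_right, core_sub_left, core_sub_right,
          core_smul_left, core_smul_right, huu, hvv, huv, hvu]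
        linear_combination hks
      have hz0 : z ≠ 0 := core_ne_zero_of_self_ne p₁ (by rw [hzz]; norm_num)
      have hz'0 : z' ≠ 0 := core_ne_zero_of_self_ne p₁ (by rw [hz'z']; norm_num)
      have huz : p₁.inner u z = k := by
        rw [hz_def]
        simp only [core_add_right, core_smul_right, huu, huv]
        ring
      have huz' : p₁.inner u z' = k := by
        rw [hz'_def]
        simp only [core_sub_right, core_smul_right, huu, huv]
        ring
      have E1 : p₂.inner u z =
          k * (Real.sqrt (p₂.inner u u) * Real.sqrt (p₂.inner z z)) :=
        (h u z hu0 hz0).mp (by rw [huz, huu, hzz]; simp)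
      have E2 : p₂.inner u z' =
          k * (Real.sqrt (p₂.inner u u) * Real.sqrt (p₂.inner z' z')) :=
        (h u z' hu0 hz'0).mp (by rw [huz', huu, hz'z']; simp)
      have hbvu : p₂.inner v u = p₂.inner u v := core_symm p₂ v u
      have ha : 0 < p₂.inner u u := core_self_pos p₂ hu0
      have euz : p₂.inner u z = k * p₂.inner u u + s * p₂.inner u v := by
        rw [hz_def]
        simp only [core_add_right, core_smul_right]
      have euz' : p₂.inner u z' = k * p₂.inner u u - s * p₂.inner u v := by
        rw [hz'_def]
        simp only [core_sub_right, core_smul_right]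
      have ezz : p₂.inner z z = k ^ 2 * p₂.inner u u + 2 * k * s * p₂.inner u v
          + s ^ 2 * p₂.inner v v := by
        rw [hz_def]
        simp only [core_add_left, core_add_right, core_smul_left, core_smul_right, hbvu]
        ring
      have ez'z' : p₂.inner z' z' = k ^ 2 * p₂.inner u u - 2 * k * s * p₂.inner u v
          + s ^ 2 * p₂.inner v v := by
        rw [hz'_def]
        simp only [core_sub_left, core_sub_right, core_smul_left, core_smul_right, hbvu]
        ring
      have sq1 : (k * p₂.inner u u + s * p₂.inner u v) ^ 2 =
          k ^ 2 * (p₂.inner u u * (k ^ 2 * p₂.inner u u + 2 * k * s * p₂.inner u v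
            + s ^ 2 * p₂.inner v v)) := by
        rw [← euz, ← ezz, E1, mul_pow, mul_pow,
          Real.sq_sqrt (core_self_nonneg p₂ u), Real.sq_sqrt (core_self_nonneg p₂ z)]
      have sq2 : (k * p₂.inner u u - s * p₂.inner u v) ^ 2 =
          k ^ 2 * (p₂.inner u u * (k ^ 2 * p₂.inner u u - 2 * k * s * p₂.inner u v
            + s ^ 2 * p₂.inner v v)) := by
        rw [← euz', ← ez'z', E2, mul_pow, mul_pow,
          Real.sq_sqrt (core_self_nonneg p₂ u), Real.sq_sqrt (core_self_nonneg p₂ z')]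
      have hb0 : p₂.inner u v = 0 := by
        have h4 : (4 * k * s ^ 3 * p₂.inner u u) * p₂.inner u v = 0 := by
          linear_combination sq1 - sq2 + 4 * k * p₂.inner u u * s * p₂.inner u v * hks
        have hne : 4 * k * s ^ 3 * p₂.inner u u ≠ 0 :=
          mul_ne_zero (mul_ne_zero (mul_ne_zero (by norm_num) hk0)
            (pow_ne_zero 3 (ne_of_gt hs))) (ne_of_gt ha)
        exact (mul_eq_zero.mp h4).resolve_left hne
      have hfin : p₂.inner u v =
          (Real.sqrt (p₁.inner x x))⁻¹ * ((Real.sqrt (p₁.inner y y))⁻¹ * p₂.inner x y) := by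
        rw [hu_def, hv_def, core_smul_left, core_smul_right]
      rw [hb0] at hfin
      have hfin2 := hfin.symm
      field_simp at hfin2
      simpa using hfin2
  -- Step 2: the ratio is the same on p₁-orthogonal pairs
  have hratio : ∀ x y : V, x ≠ 0 → y ≠ 0 → p₁.inner x y = 0 →
      p₂.inner x x * p₁.inner y y = p₂.inner y y * p₁.inner x x := by
    intro x y hx hy hxy
    have hα : 0 < p₁.inner x x := core_self_pos p₁ hx
    have hβ : 0 < p₁.inner y y := core_self_pos p₁ hy
    obtain ⟨u, hu_def⟩ : ∃ u : V, u = Real.sqrt (p₁.inner y y) • x := ⟨_, rfl⟩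
    obtain ⟨w, hw_def⟩ : ∃ w : V, w = Real.sqrt (p₁.inner x x) • y := ⟨_, rfl⟩
    have hyx : p₁.inner y x = 0 := by rw [core_symm]; exact hxy
    have hsx := Real.sq_sqrt (le_of_lt hα)
    have hsy := Real.sq_sqrt (le_of_lt hβ)
    have e1 : p₁.inner (u + w) (u - w) = 0 := by
      rw [hu_def, hw_def]
      simp only [core_add_left, core_add_right, core_sub_left, core_sub_right,
        core_smul_left, core_smul_right, hxy, hyx]
      linear_combination p₁.inner x x * hsy - p₁.inner y y * hsx
    have e2 : p₁.inner (u + w) (u + w) = 2 * (p₁.inner x x * p₁.inner y y) := by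
      rw [hu_def, hw_def]
      simp only [core_add_left, core_add_right, core_smul_left, core_smul_right, hxy, hyx]
      linear_combination p₁.inner x x * hsy + p₁.inner y y * hsx
    have e3 : p₁.inner (u - w) (u - w) = 2 * (p₁.inner x x * p₁.inner y y) := by
      rw [hu_def, hw_def]
      simp only [core_sub_left, core_sub_right, core_smul_left, core_smul_right, hxy, hyx]
      linear_combination p₁.inner x x * hsy + p₁.inner y y * hsx
    have hpos : (0:ℝ) < 2 * (p₁.inner x x * p₁.inner y y) := by positivity
    have hu0 : u + w ≠ 0 := core_ne_zero_of_self_ne p₁ (by rw [e2]; exact ne_of_gt hpos)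
    have hw0 : u - w ≠ 0 := core_ne_zero_of_self_ne p₁ (by rw [e3]; exact ne_of_gt hpos)
    have o2 : p₂.inner (u + w) (u - w) = 0 := orth _ _ hu0 hw0 e1
    rw [hu_def, hw_def] at o2
    simp only [core_add_left, core_add_right, core_sub_left, core_sub_right,
      core_smul_left, core_smul_right, core_symm p₂ y x] at o2
    linear_combination o2 - p₂.inner x x * hsy + p₂.inner y y * hsx
  -- Step 3: conclude
  by_cases hV : ∀ x : V, x = 0
  · refine ⟨1, one_pos, fun x y => ?_⟩
    rw [hV x, core_zero_left, core_zero_left]; ring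
  · push_neg at hV
    obtain ⟨e, he⟩ := hV
    have hee : 0 < p₁.inner e e := core_self_pos p₁ he
    have hee2 : 0 < p₂.inner e e := core_self_pos p₂ he
    refine ⟨p₂.inner e e / p₁.inner e e, div_pos hee2 hee, ?_⟩
    obtain ⟨c, hc_def⟩ : ∃ c : ℝ, c = p₂.inner e e / p₁.inner e e := ⟨_, rfl⟩
    rw [← hc_def]
    have hce : p₂.inner e e = c * p₁.inner e e := by
      rw [hc_def]; field_simp
    have self : ∀ x : V, p₂.inner x x = c * p₁.inner x x := by
      intro x
      by_cases hx : x = 0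
      · rw [hx, core_zero_left, core_zero_left]; ring
      · obtain ⟨t, ht_def⟩ : ∃ t : ℝ, t = p₁.inner e x / p₁.inner e e := ⟨_, rfl⟩
        obtain ⟨z, hz_def⟩ : ∃ z : V, z = x - t • e := ⟨_, rfl⟩
        have hez : p₁.inner e z = 0 := by
          rw [hz_def, core_sub_right, core_smul_right, ht_def]
          field_simp
          ring
        by_cases hz0 : z = 0
        · have hxe : x = t • e := by
            have h0 : x - t • e = 0 := by rw [← hz_def, hz0]
            have := sub_eq_zero.mp h0
            exact this
          rw [hxe, core_smul_left, core_smul_right, core_smul_left, core_smul_right, hce]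
          ring
        · have hze : p₁.inner z e = 0 := by rw [core_symm]; exact hez
          have hr := hratio z e hz0 he hze
          have hzz2 : p₂.inner z z = c * p₁.inner z z := by
            rw [hc_def, div_mul_eq_mul_div, eq_div_iff (ne_of_gt hee)]
            linear_combination hr
          have hez2 : p₂.inner e z = 0 := orth e z he hz0 hez
          have hze2 : p₂.inner z e = 0 := by rw [core_symm]; exact hez2
          have hx_eq : x = z + t • e := by rw [hz_def]; abel
          rw [hx_eq]
          simp only [core_add_left, core_add_right, core_smul_left, core_smul_right,
            hze, hez, hze2, hez2, hzz2, hce]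
          ring
    intro x y
    have h1 := self (x + y)
    have h2 := self x
    have h3 := self y
    have e2 : p₂.inner (x + y) (x + y) =
        p₂.inner x x + 2 * p₂.inner x y + p₂.inner y y := by
      rw [core_add_left, core_add_right, core_add_right, core_symm p₂ y x]; ring
    have e1 : p₁.inner (x + y) (x + y) =
        p₁.inner x x + 2 * p₁.inner x y + p₁.inner y y := by
      rw [core_add_left, core_add_right, core_add_right, core_symm p₁ y x]; ring
    rw [e1, e2] at h1
    linear_combination (h1 - h2 - h3) / 2
end

section
/- Let V be a complex vector space equipped with two inner products ⟨·,·⟩₁ and ⟨·,·⟩₂. Suppose the two inner products define the same π/2 angle, i.e., for all nonzero x, y ∈ V, Re⟨x,y⟩₁ = 0 if and only if Re⟨x,y⟩₂ = 0. Then there exists a constant c > 0 such that ⟨x,y⟩₂ = c·⟨x,y⟩₁ for all x, y ∈ V. -/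
namespace Stmt13Aux
variable {V : Type*} [AddCommGroup V] [Module ℂ V] (p : InnerProductSpace.Core ℂ V)

lemma add_right (x y z : V) : p.inner x (y + z) = p.inner x y + p.inner x z := by
  rw [← p.conj_inner_symm, p.add_left, map_add, p.conj_inner_symm, p.conj_inner_symm]

lemma smul_right (x y : V) (r : ℂ) : p.inner x (r • y) = r * p.inner x y := by
  rw [← p.conj_inner_symm, p.smul_left, map_mul, ← p.conj_inner_symm x y]
  simp

lemma zero_left (y : V) : p.inner 0 y = 0 := by
  have := p.smul_left 0 y 0
  simpa using this

lemma zero_right (x : V) : p.inner x 0 = 0 := by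
  have := smul_right p x 0 0
  simpa using this

lemma re_symm (x y : V) : (p.inner x y).re = (p.inner y x).re := by
  rw [← p.conj_inner_symm x y]; simp

lemma self_im (x : V) : (p.inner x x).im = 0 := by
  have := p.conj_inner_symm x x
  have h2 := congrArg Complex.im this
  simp at h2
  linarith

lemma self_pos {x : V} (hx : x ≠ 0) : 0 < (p.inner x x).re := by
  rcases lt_or_eq_of_le (p.re_inner_nonneg x) with h | h
  · exact h
  · exfalso; apply hx; apply p.definite
    simp only [RCLike.re_to_complex] at h
    apply Complex.ext <;> simp [← h, self_im]

lemma real_smul_left (a : ℝ) (x y : V) :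
    (p.inner ((a : ℂ) • x) y).re = a * (p.inner x y).re := by
  rw [p.smul_left]; simp

lemma real_smul_right (a : ℝ) (x y : V) :
    (p.inner x ((a : ℂ) • y)).re = a * (p.inner x y).re := by
  rw [smul_right]; simp

lemma re_add_left (x y z : V) :
    (p.inner (x + y) z).re = (p.inner x z).re + (p.inner y z).re := by
  rw [p.add_left]; simp

lemma re_add_right (x y z : V) :
    (p.inner x (y + z)).re = (p.inner x y).re + (p.inner x z).re := by
  rw [add_right]; simp

/-- expansion of `Q (a•x + b•y)` -/
lemma expand (a b : ℝ) (x y : V) :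
    (p.inner ((a:ℂ) • x + (b:ℂ) • y) ((a:ℂ) • x + (b:ℂ) • y)).re
      = a * a * (p.inner x x).re + 2 * (a * b) * (p.inner x y).re
        + b * b * (p.inner y y).re := by
  simp only [re_add_left, re_add_right, real_smul_left, real_smul_right]
  rw [re_symm p y x]
  ring

/-- expansion of `Re ⟪a•x + b•y, a'•x + b'•y⟫` -/
lemma expand' (a b a' b' : ℝ) (x y : V) :
    (p.inner ((a:ℂ) • x + (b:ℂ) • y) ((a':ℂ) • x + (b':ℂ) • y)).re
      = a * a' * (p.inner x x).re + (a * b' + b * a') * (p.inner x y).re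
        + b * b' * (p.inner y y).re := by
  simp only [re_add_left, re_add_right, real_smul_left, real_smul_right]
  rw [re_symm p y x]
  ring

lemma polarization (x y : V) :
    (p.inner x y).re = ((p.inner (x + y) (x + y)).re
      - (p.inner x x).re - (p.inner y y).re) / 2 := by
  rw [re_add_left, re_add_right, re_add_right, re_symm p y x]
  ring

lemma inner_I_right (x y : V) :
    (p.inner x (Complex.I • y)).re = - (p.inner x y).im := by
  rw [smul_right]; simp

end Stmt13Aux

open Stmt13Aux

/-- Two complex inner products defining the same `π/2` (Euclidean) angle are conformal. -/
theorem stmt_13 {V : Type*} [AddCommGroup V] [Module ℂ V]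
    (p₁ p₂ : InnerProductSpace.Core ℂ V)
    (h : ∀ x y : V, x ≠ 0 → y ≠ 0 →
      ((p₁.inner x y).re = 0 ↔ (p₂.inner x y).re = 0)) :
    ∃ c : ℝ, 0 < c ∧ ∀ x y : V, p₂.inner x y = (c : ℂ) * p₁.inner x y := by
  classical
  by_cases hV : ∀ x : V, x = 0
  · refine ⟨1, one_pos, fun x y => ?_⟩
    rw [hV x, zero_left, zero_left, mul_zero]
  push_neg at hV
  obtain ⟨x₀, hx₀⟩ := hV
  have hQ₁pos : ∀ x : V, x ≠ 0 → 0 < (p₁.inner x x).re := fun x hx => self_pos p₁ hx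
  have hQ₂pos : ∀ x : V, x ≠ 0 → 0 < (p₂.inner x x).re := fun x hx => self_pos p₂ hx
  set c : ℝ := (p₂.inner x₀ x₀).re / (p₁.inner x₀ x₀).re with hc
  have hcpos : 0 < c := div_pos (hQ₂pos x₀ hx₀) (hQ₁pos x₀ hx₀)
  have hQ₁x₀ : (p₁.inner x₀ x₀).re ≠ 0 := (hQ₁pos x₀ hx₀).ne'
  -- Lemma B : orthogonal vectors have equal ratios
  have lemB : ∀ x y : V, x ≠ 0 → y ≠ 0 → (p₁.inner x y).re = 0 →
      (p₂.inner x x).re * (p₁.inner y y).re = (p₂.inner y y).re * (p₁.inner x x).re := by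
    intro x y hx hy hxy
    set a : ℝ := Real.sqrt ((p₁.inner y y).re) with hadef
    set b : ℝ := Real.sqrt ((p₁.inner x x).re) with hbdef
    have ha : 0 < a := Real.sqrt_pos.2 (hQ₁pos y hy)
    have hb : 0 < b := Real.sqrt_pos.2 (hQ₁pos x hx)
    have ha2 : a * a = (p₁.inner y y).re := Real.mul_self_sqrt (hQ₁pos y hy).le
    have hb2 : b * b = (p₁.inner x x).re := Real.mul_self_sqrt (hQ₁pos x hx).le
    set u : V := (a:ℂ) • x + (b:ℂ) • y with hu
    set v : V := (a:ℂ) • x + ((-b:ℝ):ℂ) • y with hv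
    have hRyx : (p₁.inner y x).re = 0 := by rw [re_symm p₁ y x]; exact hxy
    have hune : u ≠ 0 := by
      intro h0
      have h1 : (p₁.inner u x).re = a * (p₁.inner x x).re := by
        rw [hu, re_add_left, real_smul_left, real_smul_left, hRyx]; ring
      rw [h0, zero_left] at h1
      simp only [Complex.zero_re] at h1
      nlinarith [hQ₁pos x hx]
    have hvne : v ≠ 0 := by
      intro h0
      have h1 : (p₁.inner v x).re = a * (p₁.inner x x).re := by
        rw [hv, re_add_left, real_smul_left, real_smul_left, hRyx]; ring
      rw [h0, zero_left] at h1
      simp only [Complex.zero_re] at h1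
      nlinarith [hQ₁pos x hx]
    have huv1 : (p₁.inner u v).re = 0 := by
      rw [hu, hv, expand' p₁ a b a (-b) x y, hxy]
      nlinarith
    have huv2 : (p₂.inner u v).re = 0 := (h u v hune hvne).1 huv1
    rw [hu, hv, expand' p₂ a b a (-b) x y] at huv2
    linear_combination huv2 - (p₂.inner x x).re * ha2 + (p₂.inner y y).re * hb2
  -- Lemma C : quadratic forms are proportional
  have lemC : ∀ y : V, (p₂.inner y y).re = c * (p₁.inner y y).re := by
    intro y
    by_cases hy : y = 0
    · subst hy
      rw [zero_left, zero_left]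
      simp
    set α : ℝ := (p₁.inner x₀ y).re / (p₁.inner x₀ x₀).re with hα
    set w : V := y + ((-α:ℝ):ℂ) • x₀ with hw
    have hRe : (p₁.inner x₀ w).re = 0 := by
      rw [hw, re_add_right, real_smul_right, hα]
      field_simp
      ring
    have hyw : y = ((1:ℝ):ℂ) • w + (α:ℂ) • x₀ := by
      rw [hw]
      push_cast
      simp [smul_add, add_assoc, ← add_smul]
    by_cases hwz : w = 0
    · -- y is a real multiple of x₀
      have hy' : y = (α:ℂ) • x₀ := by rw [hyw, hwz]; simp
      have h1 : (p₁.inner y y).re = α * α * (p₁.inner x₀ x₀).re := by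
        conv_lhs => rw [hy']
        rw [real_smul_left, real_smul_right]; ring
      have h2 : (p₂.inner y y).re = α * α * (p₂.inner x₀ x₀).re := by
        conv_lhs => rw [hy']
        rw [real_smul_left, real_smul_right]; ring
      rw [h1, h2, hc]
      field_simp
    · have hRe₂ : (p₂.inner x₀ w).re = 0 := (h x₀ w hx₀ hwz).1 hRe
      have hB := lemB x₀ w hx₀ hwz hRe
      have hRw1 : (p₁.inner w x₀).re = 0 := by rw [re_symm p₁ w x₀]; exact hRe
      have hRw2 : (p₂.inner w x₀).re = 0 := by rw [re_symm p₂ w x₀]; exact hRe₂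
      have h1 : (p₁.inner y y).re
          = (p₁.inner w w).re + α * α * (p₁.inner x₀ x₀).re := by
        conv_lhs => rw [hyw]
        rw [expand p₁ 1 α w x₀, hRw1]; ring
      have h2 : (p₂.inner y y).re
          = (p₂.inner w w).re + α * α * (p₂.inner x₀ x₀).re := by
        conv_lhs => rw [hyw]
        rw [expand p₂ 1 α w x₀, hRw2]; ring
      have hQw : (p₂.inner w w).re = c * (p₁.inner w w).re := by
        rw [hc]
        rw [div_mul_eq_mul_div, eq_div_iff hQ₁x₀]
        nlinarith
      have hQx₀ : (p₂.inner x₀ x₀).re = c * (p₁.inner x₀ x₀).re := by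
        rw [hc]; field_simp
      rw [h1, h2, hQw, hQx₀]; ring
  -- Lemma D : real parts are proportional
  have lemD : ∀ x y : V, (p₂.inner x y).re = c * (p₁.inner x y).re := by
    intro x y
    rw [polarization p₁ x y, polarization p₂ x y, lemC (x + y), lemC x, lemC y]
    ring
  refine ⟨c, hcpos, fun x y => ?_⟩
  apply Complex.ext
  · have := lemD x y
    simp only [Complex.mul_re, Complex.ofReal_re, Complex.ofReal_im, zero_mul, sub_zero]
    linarith
  · have h1 := inner_I_right p₁ x y
    have h2 := inner_I_right p₂ x y
    have h3 := lemD x (Complex.I • y)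
    simp only [Complex.mul_im, Complex.ofReal_re, Complex.ofReal_im, zero_mul, add_zero]
    rw [h1, h2] at h3
    linarith
end

section
/- Let V be a real vector space equipped with two inner products ⟨·,·⟩₁ and ⟨·,·⟩₂, with induced norms ‖·‖₁ and ‖·‖₂. Then the following are equivalent: (1) there exists c > 0 such that ⟨x,y⟩₂ = c·⟨x,y⟩₁ for all x, y ∈ V; (2) there exists c > 0 such that ‖x‖₂ = c·‖x‖₁ for all x ∈ V; (3) for all nonzero x, y ∈ V, ⟨x,y⟩₁/(‖x‖₁‖y‖₁) = ⟨x,y⟩₂/(‖x‖₂‖y‖₂); (4) for all x, y ∈ V, ⟨x,y⟩₁ = 0 if and only if ⟨x,y⟩₂ = 0. -/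
namespace StmtAux17

variable {V : Type*} [AddCommGroup V] [Module ℝ V] (p : InnerProductSpace.Core ℝ V)

lemma symm (x y : V) : p.inner x y = p.inner y x := by
  simpa using p.conj_inner_symm y x

lemma add_left' (x y z : V) : p.inner (x + y) z = p.inner x z + p.inner y z :=
  p.add_left x y z

lemma smul_left' (r : ℝ) (x y : V) : p.inner (r • x) y = r * p.inner x y := by
  simpa using p.smul_left x y r

lemma add_right' (x y z : V) : p.inner x (y + z) = p.inner x y + p.inner x z := by
  rw [symm p x (y + z), add_left', symm p y x, symm p z x]

lemma smul_right' (r : ℝ) (x y : V) : p.inner x (r • y) = r * p.inner x y := by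
  rw [symm p x (r • y), smul_left', symm p y x]

lemma zero_left (y : V) : p.inner 0 y = 0 := by
  have := smul_left' p (0 : ℝ) 0 y
  simpa using this

lemma zero_right (x : V) : p.inner x 0 = 0 := by
  rw [symm]; exact zero_left p x

lemma sub_right' (x y z : V) : p.inner x (y - z) = p.inner x y - p.inner x z := by
  have : p.inner x (y - z) + p.inner x z = p.inner x y := by
    rw [← add_right']; simp
  linarith

lemma self_nonneg (x : V) : 0 ≤ p.inner x x := by
  simpa using p.re_inner_nonneg x

lemma self_pos {x : V} (hx : x ≠ 0) : 0 < p.inner x x := by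
  rcases lt_or_eq_of_le (self_nonneg p x) with h | h
  · exact h
  · exact absurd (p.definite x h.symm) hx

lemma expand (x y : V) :
    p.inner (x + y) (x + y) = p.inner x x + 2 * p.inner x y + p.inner y y := by
  rw [add_left', add_right', add_right', symm p y x]; ring

end StmtAux17

open StmtAux17 in
/-- For two real inner products on a vector space `V`, the following are equivalent:
(1) they are conformal; (2) the induced norms are proportional; (3) they define the same
angles for all pairs of nonzero vectors; (4) they define the same orthogonality
relations. -/
theorem stmt_17 {V : Type*} [AddCommGroup V] [Module ℝ V]
    (p₁ p₂ : InnerProductSpace.Core ℝ V) :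
    [∃ c : ℝ, 0 < c ∧ ∀ x y : V, p₂.inner x y = c * p₁.inner x y,
     ∃ c : ℝ, 0 < c ∧ ∀ x : V,
       Real.sqrt (p₂.inner x x) = c * Real.sqrt (p₁.inner x x),
     ∀ x y : V, x ≠ 0 → y ≠ 0 →
       p₁.inner x y / (Real.sqrt (p₁.inner x x) * Real.sqrt (p₁.inner y y)) =
       p₂.inner x y / (Real.sqrt (p₂.inner x x) * Real.sqrt (p₂.inner y y)),
     ∀ x y : V, p₁.inner x y = 0 ↔ p₂.inner x y = 0].TFAE := by
  tfae_have 1 → 2 := by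
    rintro ⟨c, hc, h⟩
    exact ⟨Real.sqrt c, Real.sqrt_pos.2 hc, fun x => by
      rw [h x x, Real.sqrt_mul hc.le]⟩
  tfae_have 2 → 1 := by
    rintro ⟨c, hc, h⟩
    refine ⟨c ^ 2, by positivity, fun x y => ?_⟩
    have key : ∀ z : V, p₂.inner z z = c ^ 2 * p₁.inner z z := by
      intro z
      have h1 := h z
      have h2 : Real.sqrt (p₂.inner z z) ^ 2 = (c * Real.sqrt (p₁.inner z z)) ^ 2 := by
        rw [h1]
      rwa [Real.sq_sqrt (self_nonneg p₂ z), mul_pow, Real.sq_sqrt (self_nonneg p₁ z)] at h2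
    have e1 := expand p₁ x y
    have e2 := expand p₂ x y
    have k1 := key x
    have k2 := key y
    have k3 := key (x + y)
    nlinarith [k1, k2, k3, e1, e2]
  tfae_have 1 → 3 := by
    rintro ⟨c, hc, h⟩
    intro x y hx hy
    rw [h x y, h x x, h y y, Real.sqrt_mul hc.le, Real.sqrt_mul hc.le]
    have : Real.sqrt c * Real.sqrt (p₁.inner x x) * (Real.sqrt c * Real.sqrt (p₁.inner y y))
        = c * (Real.sqrt (p₁.inner x x) * Real.sqrt (p₁.inner y y)) := by
      have hsc : Real.sqrt c * Real.sqrt c = c := Real.mul_self_sqrt hc.le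
      linear_combination Real.sqrt (p₁.inner x x) * Real.sqrt (p₁.inner y y) * hsc
    rw [this, mul_div_mul_left _ _ (ne_of_gt hc)]
  tfae_have 3 → 4 := by
    intro h x y
    by_cases hx : x = 0
    · subst hx; simp [zero_left]
    by_cases hy : y = 0
    · subst hy; simp [zero_right]
    have h1 : (0:ℝ) < Real.sqrt (p₁.inner x x) * Real.sqrt (p₁.inner y y) := by
      have := self_pos p₁ hx; have := self_pos p₁ hy; positivity
    have h2 : (0:ℝ) < Real.sqrt (p₂.inner x x) * Real.sqrt (p₂.inner y y) := by
      have := self_pos p₂ hx; have := self_pos p₂ hy; positivity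
    have he := h x y hx hy
    constructor
    · intro h0
      have hz : p₂.inner x y / (Real.sqrt (p₂.inner x x) * Real.sqrt (p₂.inner y y)) = 0 := by
        rw [← he]; simp [h0]
      exact (div_eq_zero_iff.1 hz).resolve_right (ne_of_gt h2)
    · intro h0
      have hz : p₁.inner x y / (Real.sqrt (p₁.inner x x) * Real.sqrt (p₁.inner y y)) = 0 := by
        rw [he]; simp [h0]
      exact (div_eq_zero_iff.1 hz).resolve_right (ne_of_gt h1)
  tfae_have 4 → 1 := by
    intro h
    by_cases htriv : ∀ x : V, x = 0
    · exact ⟨1, one_pos, fun x y => by rw [htriv x, zero_left, zero_left, mul_zero]⟩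
    push_neg at htriv
    obtain ⟨x₀, hx₀⟩ := htriv
    -- Lemma A
    have A : ∀ x : V, x ≠ 0 → ∀ y : V,
        p₂.inner x y = (p₂.inner x x / p₁.inner x x) * p₁.inner x y := by
      intro x hx y
      set t := p₁.inner x y / p₁.inner x x with ht
      have hpx := self_pos p₁ hx
      have horth : p₁.inner x (y - t • x) = 0 := by
        rw [sub_right', smul_right', ht]
        field_simp
        ring
      have horth2 : p₂.inner x (y - t • x) = 0 := (h x (y - t • x)).1 horth
      have : p₂.inner x y = t * p₂.inner x x := by
        have := sub_right' p₂ x y (t • x)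
        rw [smul_right'] at this
        linarith [horth2, this]
      rw [this, ht]
      field_simp
    -- Lemma B : the ratio is constant on nonzero vectors
    have B : ∀ x y : V, x ≠ 0 → y ≠ 0 →
        p₂.inner x x / p₁.inner x x = p₂.inner y y / p₁.inner y y := by
      have key : ∀ x y : V, x ≠ 0 → y ≠ 0 → p₁.inner x y ≠ 0 →
          p₂.inner x x / p₁.inner x x = p₂.inner y y / p₁.inner y y := by
        intro x y hx hy hxy
        have e1 := A x hx y
        have e2 := A y hy x
        rw [symm p₂ y x, symm p₁ y x] at e2
        exact mul_right_cancel₀ hxy (e1.symm.trans e2)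
      intro x y hx hy
      by_cases hxy : p₁.inner x y = 0
      · have hxsum : p₁.inner x (x + y) ≠ 0 := by
          rw [add_right', hxy, add_zero]
          exact ne_of_gt (self_pos p₁ hx)
        have hsum : x + y ≠ 0 := by
          intro h0
          rw [h0, zero_right] at hxsum
          exact hxsum rfl
        have hysum : p₁.inner y (x + y) ≠ 0 := by
          rw [add_right', symm p₁ y x, hxy, zero_add]
          exact ne_of_gt (self_pos p₁ hy)
        calc p₂.inner x x / p₁.inner x x
            = p₂.inner (x+y) (x+y) / p₁.inner (x+y) (x+y) := key x (x+y) hx hsum hxsum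
          _ = p₂.inner y y / p₁.inner y y := (key y (x+y) hy hsum hysum).symm
      · exact key x y hx hy hxy
    set c := p₂.inner x₀ x₀ / p₁.inner x₀ x₀ with hc
    have hcpos : 0 < c := div_pos (self_pos p₂ hx₀) (self_pos p₁ hx₀)
    refine ⟨c, hcpos, fun x y => ?_⟩
    by_cases hx : x = 0
    · rw [hx, zero_left, zero_left, mul_zero]
    · rw [A x hx y, B x x₀ hx hx₀, hc]
  tfae_finish
end

section
/- Let V be a complex vector space equipped with two inner products ⟨·,·⟩₁ and ⟨·,·⟩₂, with induced norms ‖·‖₁ and ‖·‖₂. Then the following are equivalent: (1) there exists c > 0 such that ⟨x,y⟩₂ = c·⟨x,y⟩₁ for all x, y ∈ V; (2) there exists c > 0 such that ‖x‖₂ = c·‖x‖₁ for all x ∈ V; (3) for all nonzero x, y ∈ V, Re⟨x,y⟩₁/(‖x‖₁‖y‖₁) = Re⟨x,y⟩₂/(‖x‖₂‖y‖₂); (4) for all nonzero x, y ∈ V, Re⟨x,y⟩₁ = 0 if and only if Re⟨x,y⟩₂ = 0; (5) for all x, y ∈ V, ⟨x,y⟩₁ = 0 if and only if ⟨x,y⟩₂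 = 0. -/
open Complex

namespace Stmt18Aux

variable {V : Type*} [AddCommGroup V] [Module ℂ V] (p : InnerProductSpace.Core ℂ V)

lemma conj_symm' (x y : V) : (starRingEnd ℂ) (p.inner y x) = p.inner x y := p.conj_inner_symm x y

lemma inner_self_eq_re (x : V) : p.inner x x = ((p.inner x x).re : ℂ) := by
  have h := congrArg Complex.im (p.conj_inner_symm x x)
  simp only [Complex.conj_im] at h
  apply Complex.ext <;> simp
  linarith

lemma inner_self_re_pos {x : V} (hx : x ≠ 0) : 0 < (p.inner x x).re := by
  have hn : 0 ≤ (p.inner x x).re := by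
    have := p.re_inner_nonneg x; rwa [RCLike.re_to_complex] at this
  rcases lt_or_eq_of_le hn with h | h
  · exact h
  · exact absurd (p.definite x (by rw [inner_self_eq_re, ← h]; simp)) hx

lemma inner_self_ne_zero {x : V} (hx : x ≠ 0) : p.inner x x ≠ 0 := by
  intro h
  have := inner_self_re_pos p hx
  rw [h] at this; simp at this

lemma smul_right (x y : V) (r : ℂ) : p.inner x (r • y) = r * p.inner x y := by
  rw [← conj_symm' p x (r • y), p.smul_left, map_mul, Complex.conj_conj, conj_symm']

lemma add_right (x y z : V) : p.inner x (y + z) = p.inner x y + p.inner x z := by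
  rw [← conj_symm' p x (y + z), p.add_left, map_add, conj_symm', conj_symm']

lemma sub_right (x y z : V) : p.inner x (y - z) = p.inner x y - p.inner x z := by
  have : y - z = y + (-1 : ℂ) • z := by simp [sub_eq_add_neg]
  rw [this, add_right, smul_right]; ring

lemma inner_zero_left (y : V) : p.inner 0 y = 0 := by
  have := p.smul_left 0 y 0
  simpa using this

lemma inner_zero_right (x : V) : p.inner x 0 = 0 := by
  rw [← conj_symm' p, Stmt18Aux.inner_zero_left]; simp

lemma inner_I_smul_right (x y : V) : p.inner x (I • y) = I * p.inner x y :=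
  smul_right p x y I

lemma re_polar (x y : V) :
    (p.inner x y).re
      = ((p.inner (x+y) (x+y)).re - (p.inner x x).re - (p.inner y y).re) / 2 := by
  have h : p.inner (x+y) (x+y) = p.inner x x + p.inner x y + p.inner y x + p.inner y y := by
    rw [p.add_left, add_right, add_right]; ring
  have him : (p.inner y x).re = (p.inner x y).re := by
    rw [← conj_symm' p x y]; simp
  have := congrArg Complex.re h
  simp only [Complex.add_re] at this
  rw [this, him]; ring

end Stmt18Aux

open Stmt18Aux

/-- For two complex inner products on a vector space `V`, the following are equivalent:
(1) they are conformal; (2) the induced norms are proportional; (3) they define the same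
(Euclidean) angles for all pairs of nonzero vectors; (4) they define the same `π/2` angle;
(5) they define the same orthogonality relations. -/
theorem stmt_18 {V : Type*} [AddCommGroup V] [Module ℂ V]
    (p₁ p₂ : InnerProductSpace.Core ℂ V) :
    [∃ c : ℝ, 0 < c ∧ ∀ x y : V, p₂.inner x y = (c : ℂ) * p₁.inner x y,
     ∃ c : ℝ, 0 < c ∧ ∀ x : V,
       Real.sqrt (p₂.inner x x).re = c * Real.sqrt (p₁.inner x x).re,
     ∀ x y : V, x ≠ 0 → y ≠ 0 →
       (p₁.inner x y).re / (Real.sqrt (p₁.inner x x).re * Real.sqrt (p₁.inner y y).re) =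
       (p₂.inner x y).re / (Real.sqrt (p₂.inner x x).re * Real.sqrt (p₂.inner y y).re),
     ∀ x y : V, x ≠ 0 → y ≠ 0 → ((p₁.inner x y).re = 0 ↔ (p₂.inner x y).re = 0),
     ∀ x y : V, p₁.inner x y = 0 ↔ p₂.inner x y = 0].TFAE := by
  tfae_have 1 → 2 := by
    rintro ⟨c, hc, h⟩
    refine ⟨Real.sqrt c, Real.sqrt_pos.mpr hc, fun x => ?_⟩
    rw [h x x, ← Real.sqrt_mul hc.le]
    congr 1
    simp [Complex.re_ofReal_mul]
  tfae_have 2 → 1 := by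
    rintro ⟨c, hc, h⟩
    have hN : ∀ x : V, (p₂.inner x x).re = c ^ 2 * (p₁.inner x x).re := by
      intro x
      have h1 : 0 ≤ (p₁.inner x x).re := by
        have := p₁.re_inner_nonneg x; rwa [RCLike.re_to_complex] at this
      have h2 : 0 ≤ (p₂.inner x x).re := by
        have := p₂.re_inner_nonneg x; rwa [RCLike.re_to_complex] at this
      calc (p₂.inner x x).re = Real.sqrt (p₂.inner x x).re ^ 2 := (Real.sq_sqrt h2).symm
        _ = (c * Real.sqrt (p₁.inner x x).re) ^ 2 := by rw [h x]
        _ = c ^ 2 * (p₁.inner x x).re := by rw [mul_pow, Real.sq_sqrt h1]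
    have hre : ∀ x y : V, (p₂.inner x y).re = c ^ 2 * (p₁.inner x y).re := by
      intro x y
      rw [re_polar p₁, re_polar p₂, hN, hN, hN]; ring
    refine ⟨c ^ 2, by positivity, fun x y => ?_⟩
    apply Complex.ext
    · rw [Complex.re_ofReal_mul, hre]
    · have h1 := hre x (I • y)
      rw [inner_I_smul_right, inner_I_smul_right] at h1
      have h2 : -(p₂.inner x y).im = c ^ 2 * -(p₁.inner x y).im := by
        simpa [Complex.mul_re] using h1
      simp only [Complex.im_ofReal_mul]
      linarith
  tfae_have 1 → 3 := by
    rintro ⟨c, hc, h⟩ x y hx hy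
    have hre : ∀ u v : V, (p₂.inner u v).re = c * (p₁.inner u v).re := by
      intro u v; rw [h u v, Complex.re_ofReal_mul]
    have hs : ∀ u : V, Real.sqrt (p₂.inner u u).re
        = Real.sqrt c * Real.sqrt (p₁.inner u u).re := by
      intro u; rw [hre, Real.sqrt_mul hc.le]
    rw [hre, hs, hs]
    have : Real.sqrt c * Real.sqrt (p₁.inner x x).re *
        (Real.sqrt c * Real.sqrt (p₁.inner y y).re)
        = c * (Real.sqrt (p₁.inner x x).re * Real.sqrt (p₁.inner y y).re) := by
      rw [mul_mul_mul_comm, Real.mul_self_sqrt hc.le]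
    rw [this, mul_div_mul_left _ _ (ne_of_gt hc)]
  tfae_have 3 → 4 := by
    intro h x y hx hy
    constructor
    · intro h0
      have := h x y hx hy
      rw [h0, zero_div] at this
      have d2 : Real.sqrt (p₂.inner x x).re * Real.sqrt (p₂.inner y y).re ≠ 0 := by
        have a := Real.sqrt_pos.mpr (inner_self_re_pos p₂ hx)
        have b := Real.sqrt_pos.mpr (inner_self_re_pos p₂ hy)
        positivity
      exact (div_eq_zero_iff.mp this.symm).resolve_right d2
    · intro h0
      have := h x y hx hy
      rw [h0, zero_div] at this
      have d2 : Real.sqrt (p₁.inner x x).re * Real.sqrt (p₁.inner y y).re ≠ 0 := by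
        have a := Real.sqrt_pos.mpr (inner_self_re_pos p₁ hx)
        have b := Real.sqrt_pos.mpr (inner_self_re_pos p₁ hy)
        positivity
      exact (div_eq_zero_iff.mp this).resolve_right d2
  tfae_have 4 → 5 := by
    intro h x y
    by_cases hx : x = 0
    · subst hx; simp [Stmt18Aux.inner_zero_left]
    by_cases hy : y = 0
    · subst hy; simp [Stmt18Aux.inner_zero_right]
    have hIy : I • y ≠ 0 := smul_ne_zero I_ne_zero hy
    constructor
    · intro h0
      have r1 : (p₂.inner x y).re = 0 := (h x y hx hy).mp (by rw [h0]; rfl)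
      have r2 : (p₂.inner x (I • y)).re = 0 := by
        apply (h x (I • y) hx hIy).mp
        rw [inner_I_smul_right, h0, mul_zero]; rfl
      rw [inner_I_smul_right] at r2
      apply Complex.ext
      · exact r1
      · simpa [Complex.mul_re] using r2
    · intro h0
      have r1 : (p₁.inner x y).re = 0 := (h x y hx hy).mpr (by rw [h0]; rfl)
      have r2 : (p₁.inner x (I • y)).re = 0 := by
        apply (h x (I • y) hx hIy).mpr
        rw [inner_I_smul_right, h0, mul_zero]; rfl
      rw [inner_I_smul_right] at r2
      apply Complex.ext
      · exact r1
      · simpa [Complex.mul_re] using r2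
  tfae_have 5 → 1 := by
    intro h5
    by_cases hV : ∀ x : V, x = 0
    · exact ⟨1, one_pos, fun x y => by rw [hV x, Stmt18Aux.inner_zero_left, Stmt18Aux.inner_zero_left, mul_zero]⟩
    push_neg at hV
    obtain ⟨x₀, hx₀⟩ := hV
    set c : V → ℝ := fun x => (p₂.inner x x).re / (p₁.inner x x).re with hcdef
    have key : ∀ x : V, x ≠ 0 → ∀ y : V, p₂.inner x y = (c x : ℂ) * p₁.inner x y := by
      intro x hx y
      have h1 : p₁.inner x x ≠ 0 := inner_self_ne_zero p₁ hx
      set a : ℂ := p₁.inner x y / p₁.inner x x with ha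
      have hz : p₁.inner x (y - a • x) = 0 := by
        rw [sub_right, smul_right, ha, div_mul_cancel₀ _ h1, sub_self]
      have hz2 : p₂.inner x (y - a • x) = 0 := (h5 x (y - a • x)).mp hz
      rw [sub_right, smul_right, sub_eq_zero] at hz2
      rw [hz2, ha]
      rw [inner_self_eq_re p₁, inner_self_eq_re p₂, hcdef]
      have h1' : ((p₁.inner x x).re : ℂ) ≠ 0 := by
        rw [← inner_self_eq_re]; exact h1
      push_cast
      field_simp
    have cpos : ∀ x : V, x ≠ 0 → 0 < c x := fun x hx =>
      div_pos (inner_self_re_pos p₂ hx) (inner_self_re_pos p₁ hx)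
    have step : ∀ x y : V, x ≠ 0 → y ≠ 0 → p₁.inner x y ≠ 0 → c x = c y := by
      intro x y hx hy hne
      have e1 : p₂.inner x y = (c x : ℂ) * p₁.inner x y := key x hx y
      have e2 : p₂.inner x y = (c y : ℂ) * p₁.inner x y := by
        rw [← conj_symm' p₂ x y, key y hy x, map_mul, Complex.conj_ofReal, conj_symm']
      have : (c x : ℂ) = (c y : ℂ) := mul_right_cancel₀ hne (e1.symm.trans e2)
      exact_mod_cast this
    have const : ∀ x y : V, x ≠ 0 → y ≠ 0 → c x = c y := by
      intro x y hx hy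
      by_cases hne : p₁.inner x y ≠ 0
      · exact step x y hx hy hne
      push_neg at hne
      have hxy : x + y ≠ 0 := by
        intro hc
        have : y = -x := by linear_combination (norm := abel) hc
        rw [this] at hne
        have : p₁.inner x ((-1 : ℂ) • x) = 0 := by
          convert hne using 2; simp
        rw [smul_right] at this
        simp at this
        exact inner_self_ne_zero p₁ hx this
      have e1 : c x = c (x + y) := by
        apply step x (x+y) hx hxy
        rw [add_right, hne, add_zero]
        exact inner_self_ne_zero p₁ hx
      have e2 : c y = c (x + y) := by
        apply step y (x+y) hy hxy
        rw [add_right]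
        have : p₁.inner y x = 0 := by rw [← conj_symm' p₁ y x, hne, map_zero]
        rw [this, zero_add]
        exact inner_self_ne_zero p₁ hy
      rw [e1, e2]
    refine ⟨c x₀, cpos x₀ hx₀, fun x y => ?_⟩
    by_cases hx : x = 0
    · subst hx; rw [Stmt18Aux.inner_zero_left, Stmt18Aux.inner_zero_left, mul_zero]
    rw [key x hx y, const x x₀ hx hx₀]
  tfae_finish
end
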